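/- arXiv:2512.19230 — 4 statements merged into one kernel-verified Lean document; each statement's English description precedes it below -/
import Mathlib

section
/- Let f(·|x) be a conditional Lebesgue density of T given X = x on ℝ, and g: 𝒳 → ℝ measurable. Define B_n = {(t,x) : |t - g(x)| ≤ 1/n} and c_n = ∫ P(T ∈ [g(x)-1/n, g(x)+1/n] | X=x) dF_X(x). If c_n > 0 for all n, then the functions h_n(t,x) = 1{(t,x) ∈ B_n}/√c_n satisfy ‖h_n‖_{L²(P_{T,X})} = 1 while E[h_n(g(X), X)] = 1/√c_n → ∞ as n → ∞ (since c_n → 0 by dominated convergence). -/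
open MeasureTheory ProbabilityTheory Filter Topology

/-- Non-pathwise-differentiability construction: if `T | X = x` has a Lebesgue density
`f(·|x)`, `B_n = {(t,x) : |t - g(x)| ≤ 1/n}` and `c_n = P(|T - g(X)| ≤ 1/n) > 0`, then
`h_n(t,x) = 1{(t,x) ∈ B_n}/√c_n` has unit `L²(P_{T,X})` norm while
`E[h_n(g(X),X)] = 1/√c_n → ∞`. -/
theorem deterministic_welfare_unbounded_functional
    {Ω 𝒳 : Type*} [MeasurableSpace Ω] [MeasurableSpace 𝒳]
    (μ : Measure Ω) [IsProbabilityMeasure μ]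
    (T : Ω → ℝ) (X : Ω → 𝒳) (hT : Measurable T) (hX : Measurable X)
    (g : 𝒳 → ℝ) (hg : Measurable g)
    (f : ℝ → 𝒳 → ℝ) (hf : Measurable (Function.uncurry f))
    -- `f(·|x)` is the conditional Lebesgue density of `T` given `X = x`:
    (hdens : ∀ G : ℝ → 𝒳 → ℝ, Measurable (Function.uncurry G) →
      (∃ C, ∀ t x, |G t x| ≤ C) →
      ∫ ω, G (T ω) (X ω) ∂μ
        = ∫ ω, ∫ t, G t (X ω) * f t (X ω) ∂(volume : Measure ℝ) ∂μ)
    (c : ℕ → ℝ)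
    (hc : ∀ n : ℕ, c n = (μ {ω | |T ω - g (X ω)| ≤ 1 / (n : ℝ)}).toReal)
    (hcpos : ∀ n : ℕ, 1 ≤ n → 0 < c n)
    (h : ℕ → ℝ → 𝒳 → ℝ)
    (hdef : ∀ (n : ℕ) (t : ℝ) (x : 𝒳),
      h n t x = (if |t - g x| ≤ 1 / (n : ℝ) then (1 : ℝ) else 0) / Real.sqrt (c n)) :
    (∀ n : ℕ, 1 ≤ n → ∫ ω, (h n (T ω) (X ω)) ^ 2 ∂μ = 1) ∧
    (∀ n : ℕ, 1 ≤ n → ∫ ω, h n (g (X ω)) (X ω) ∂μ = 1 / Real.sqrt (c n)) ∧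
    Tendsto (fun n => ∫ ω, h n (g (X ω)) (X ω) ∂μ) atTop atTop := by
  have hA : ∀ n : ℕ, MeasurableSet {ω | |T ω - g (X ω)| ≤ 1 / (n : ℝ)} := fun n =>
    measurableSet_le ((hT.sub (hg.comp hX)).abs) measurable_const
  -- indicator integral equals c n
  have key : ∀ n : ℕ,
      ∫ ω, (if |T ω - g (X ω)| ≤ 1 / (n : ℝ) then (1 : ℝ) else 0) ∂μ = c n := by
    intro n
    rw [hc, ← measureReal_def, ← integral_indicator_one (hA n)]
    refine integral_congr_ae (Filter.Eventually.of_forall fun ω => ?_)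
    simp [Set.indicator_apply, Set.mem_setOf_eq]
  -- part 1
  have part1 : ∀ n : ℕ, 1 ≤ n → ∫ ω, (h n (T ω) (X ω)) ^ 2 ∂μ = 1 := by
    intro n hn
    have hcn := hcpos n hn
    have heq : ∀ ω, (h n (T ω) (X ω)) ^ 2
        = (if |T ω - g (X ω)| ≤ 1 / (n : ℝ) then (1 : ℝ) else 0) / c n := by
      intro ω
      rw [hdef, div_pow, Real.sq_sqrt hcn.le]
      congr 1
      by_cases hb : |T ω - g (X ω)| ≤ 1 / (n : ℝ) <;> simp [hb]
    calc ∫ ω, (h n (T ω) (X ω)) ^ 2 ∂μ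
        = ∫ ω, (if |T ω - g (X ω)| ≤ 1 / (n : ℝ) then (1 : ℝ) else 0) / c n ∂μ := by
          exact integral_congr_ae (Filter.Eventually.of_forall heq)
      _ = (∫ ω, (if |T ω - g (X ω)| ≤ 1 / (n : ℝ) then (1 : ℝ) else 0) ∂μ) / c n :=
          integral_div _ _
      _ = c n / c n := by rw [key n]
      _ = 1 := div_self hcn.ne'
  -- part 2
  have part2 : ∀ n : ℕ, 1 ≤ n →
      ∫ ω, h n (g (X ω)) (X ω) ∂μ = 1 / Real.sqrt (c n) := by
    intro n _
    have heq : ∀ ω, h n (g (X ω)) (X ω) = 1 / Real.sqrt (c n) := by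
      intro ω
      rw [hdef]
      have : |g (X ω) - g (X ω)| ≤ 1 / (n : ℝ) := by
        simp only [sub_self, abs_zero]
        positivity
      rw [if_pos this]
    rw [integral_congr_ae (Filter.Eventually.of_forall heq), integral_const]
    simp
  refine ⟨part1, part2, ?_⟩
  -- μ {T = g X} = 0
  have hset : MeasurableSet {ω | T ω = g (X ω)} := measurableSet_eq_fun hT (hg.comp hX)
  have hzero : (μ {ω | T ω = g (X ω)}).toReal = 0 := by
    have hG : Measurable (Function.uncurry (fun t x => if t = g x then (1 : ℝ) else 0)) := by
      have : MeasurableSet {p : ℝ × 𝒳 | p.1 = g p.2} :=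
        measurableSet_eq_fun measurable_fst (hg.comp measurable_snd)
      exact Measurable.ite this measurable_const measurable_const
    have hbd : ∃ C, ∀ (t : ℝ) (x : 𝒳),
        |(fun t x => if t = g x then (1 : ℝ) else 0) t x| ≤ C := by
      exact ⟨1, fun t x => by by_cases hb : t = g x <;> simp [hb]⟩
    have hd := hdens _ hG hbd
    have hlhs : ∫ ω, (if T ω = g (X ω) then (1 : ℝ) else 0) ∂μ
        = (μ {ω | T ω = g (X ω)}).toReal := by
      rw [← measureReal_def, ← integral_indicator_one hset]
      refine integral_congr_ae (Filter.Eventually.of_forall fun ω => ?_)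
      simp [Set.indicator_apply, Set.mem_setOf_eq]
    have hrhs : ∀ ω, ∫ t, (if t = g (X ω) then (1 : ℝ) else 0) * f t (X ω)
        ∂(volume : Measure ℝ) = 0 := by
      intro ω
      apply integral_eq_zero_of_ae
      have hae : ∀ᵐ t : ℝ, t ≠ g (X ω) := by
        rw [ae_iff]
        simp only [not_not, Set.setOf_eq_eq_singleton]
        exact measure_singleton (g (X ω))
      filter_upwards [hae] with t ht
      simp [ht]
    rw [hlhs] at hd
    rw [hd]
    simp only [hrhs, integral_zero]
  have hzero' : μ {ω | T ω = g (X ω)} = 0 := by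
    rw [ENNReal.toReal_eq_zero_iff] at hzero
    exact hzero.resolve_right (measure_ne_top μ _)
  -- c n → 0
  have hanti : Antitone (fun n : ℕ => {ω | |T ω - g (X ω)| ≤ 1 / ((n + 1 : ℕ) : ℝ)}) := by
    intro m n hmn ω hω
    simp only [Set.mem_setOf_eq] at hω ⊢
    refine hω.trans (one_div_le_one_div_of_le (by positivity) ?_)
    exact_mod_cast Nat.succ_le_succ hmn
  have hinter : (⋂ n : ℕ, {ω | |T ω - g (X ω)| ≤ 1 / ((n + 1 : ℕ) : ℝ)})
      = {ω | T ω = g (X ω)} := by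
    ext ω
    simp only [Set.mem_iInter, Set.mem_setOf_eq]
    constructor
    · intro hh
      have hle : |T ω - g (X ω)| ≤ 0 := by
        refine ge_of_tendsto' tendsto_one_div_add_atTop_nhds_zero_nat fun n => ?_
        simpa using hh n
      have := abs_nonneg (T ω - g (X ω))
      have : |T ω - g (X ω)| = 0 := le_antisymm hle this
      rwa [abs_eq_zero, sub_eq_zero] at this
    · intro hh n
      rw [hh]
      simp only [sub_self, abs_zero]
      positivity
  have hmt : Tendsto (fun n : ℕ => μ {ω | |T ω - g (X ω)| ≤ 1 / ((n + 1 : ℕ) : ℝ)})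
      atTop (𝓝 0) := by
    have := tendsto_measure_iInter_atTop
      (μ := μ) (s := fun n : ℕ => {ω | |T ω - g (X ω)| ≤ 1 / ((n + 1 : ℕ) : ℝ)})
      (fun n => (hA (n + 1)).nullMeasurableSet) hanti ⟨0, measure_ne_top μ _⟩
    rwa [hinter, hzero'] at this
  have hc0 : Tendsto c atTop (𝓝 0) := by
    rw [← tendsto_add_atTop_iff_nat 1]
    have := (ENNReal.tendsto_toReal (a := 0) (by simp)).comp hmt
    simp only [Function.comp_def] at this
    refine this.congr fun n => ?_
    rw [hc]
  -- conclude
  have hsq : Tendsto (fun n => Real.sqrt (c n)) atTop (𝓝[>] 0) := by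
    apply tendsto_nhdsWithin_of_tendsto_nhds_of_eventually_within
    · have := (Real.continuous_sqrt.tendsto 0).comp hc0
      simpa [Function.comp_def] using this
    · exact eventually_atTop.2 ⟨1, fun n hn => Real.sqrt_pos.2 (hcpos n hn)⟩
  have hdiv : Tendsto (fun n => 1 / Real.sqrt (c n)) atTop atTop := by
    simpa [one_div, Pi.inv_def] using hsq.inv_tendsto_nhdsGT_zero
  refine hdiv.congr' ?_
  filter_upwards [eventually_ge_atTop 1] with n hn
  exact (part2 n hn).symm
end

section
/- Let X be a random variable (covariate), T ∈ {0,1} with P(T=1|X)=p(X) ∈ (0,1), Y bounded, m_t(x)=E[Y|T=t,X=x], ω₁=1/p, ω₀=1/(1-p). Define τ_tp = ω₁(X)TY - ω₀(X)(1-T)Y and τ_ep = ω₁(X)T(Y-m₁(X)) - ω₀(X)(1-T)(Y-m₀(X)) + m₁(X) - m₀(X). Then E[τ_tp | X] = E[τ_ep | X] = m₁(X) - m₀(X) a.s. and E[τ_ep² | X] ≤ E[τ_tp² | X] a.s. -/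
open MeasureTheory ProbabilityTheory

section Helpers

variable {Ω : Type*} [MeasurableSpace Ω] {μ : Measure Ω}

lemma int_of_aebdd [IsFiniteMeasure μ] {f : Ω → ℝ} (hf : AEStronglyMeasurable f μ)
    {C : ℝ} (h : ∀ᵐ ω ∂μ, |f ω| ≤ C) : Integrable f μ :=
  ⟨hf, HasFiniteIntegral.of_bounded (by simpa [Real.norm_eq_abs] using h)⟩

lemma aebdd_mul {f g : Ω → ℝ} (hf : ∃ C, ∀ᵐ ω ∂μ, |f ω| ≤ C)
    (hg : ∃ C, ∀ᵐ ω ∂μ, |g ω| ≤ C) : ∃ C, ∀ᵐ ω ∂μ, |f ω * g ω| ≤ C := by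
  obtain ⟨Cf, hCf⟩ := hf
  obtain ⟨Cg, hCg⟩ := hg
  refine ⟨max Cf 0 * max Cg 0, ?_⟩
  filter_upwards [hCf, hCg] with ω h1 h2
  rw [abs_mul]
  exact mul_le_mul (h1.trans (le_max_left _ _)) (h2.trans (le_max_left _ _)) (abs_nonneg _)
    (le_max_right _ _)

lemma aebdd_add {f g : Ω → ℝ} (hf : ∃ C, ∀ᵐ ω ∂μ, |f ω| ≤ C)
    (hg : ∃ C, ∀ᵐ ω ∂μ, |g ω| ≤ C) : ∃ C, ∀ᵐ ω ∂μ, |f ω + g ω| ≤ C := by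
  obtain ⟨Cf, hCf⟩ := hf
  obtain ⟨Cg, hCg⟩ := hg
  refine ⟨Cf + Cg, ?_⟩
  filter_upwards [hCf, hCg] with ω h1 h2
  exact (abs_add_le _ _).trans (add_le_add h1 h2)

lemma aebdd_sub {f g : Ω → ℝ} (hf : ∃ C, ∀ᵐ ω ∂μ, |f ω| ≤ C)
    (hg : ∃ C, ∀ᵐ ω ∂μ, |g ω| ≤ C) : ∃ C, ∀ᵐ ω ∂μ, |f ω - g ω| ≤ C := by
  obtain ⟨Cf, hCf⟩ := hf
  obtain ⟨Cg, hCg⟩ := hg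
  refine ⟨Cf + Cg, ?_⟩
  filter_upwards [hCf, hCg] with ω h1 h2
  exact (abs_sub _ _).trans (add_le_add h1 h2)

lemma aebdd_neg {f : Ω → ℝ} (hf : ∃ C, ∀ᵐ ω ∂μ, |f ω| ≤ C) :
    ∃ C, ∀ᵐ ω ∂μ, |-f ω| ≤ C := by
  obtain ⟨Cf, hCf⟩ := hf
  exact ⟨Cf, by filter_upwards [hCf] with ω h1 using (abs_neg (f ω)) ▸ h1⟩

lemma aebdd_sq {f : Ω → ℝ} (hf : ∃ C, ∀ᵐ ω ∂μ, |f ω| ≤ C) :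
    ∃ C, ∀ᵐ ω ∂μ, |f ω ^ 2| ≤ C := by
  obtain ⟨Cf, hCf⟩ := hf
  refine ⟨max Cf 0 ^ 2, ?_⟩
  filter_upwards [hCf] with ω h1
  rw [abs_pow]
  exact pow_le_pow_left₀ (abs_nonneg _) (h1.trans (le_max_left _ _)) 2

/-- Master computation: conditional expectation of
`F·(T·Y) + G·((1-T)·Y) + H·T + R` given a sub-σ-algebra `m`, where the coefficients
are `m`-measurable and a.e. bounded. -/
lemma master_condexp {Ω' : Type*} [mΩ' : MeasurableSpace Ω'] (μ : Measure Ω') [IsProbabilityMeasure μ]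
    {m : MeasurableSpace Ω'} (hm : m ≤ mΩ')
    (T Y : Ω' → ℝ)
    (intTY : Integrable (fun ω => T ω * Y ω) μ)
    (int1TY : Integrable (fun ω => (1 - T ω) * Y ω) μ)
    (intT : Integrable T μ)
    (P M1 M0 : Ω' → ℝ)
    (hpcond : μ[T | m] =ᵐ[μ] P)
    (hm1 : μ[(fun ω => T ω * Y ω) | m] =ᵐ[μ] fun ω => P ω * M1 ω)
    (hm0 : μ[(fun ω => (1 - T ω) * Y ω) | m] =ᵐ[μ] fun ω => (1 - P ω) * M0 ω)
    (F G H R : Ω' → ℝ)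
    (sF : StronglyMeasurable[m] F) (sG : StronglyMeasurable[m] G)
    (sH : StronglyMeasurable[m] H) (sR : StronglyMeasurable[m] R)
    (hFb : ∃ C, ∀ᵐ ω ∂μ, |F ω| ≤ C) (hGb : ∃ C, ∀ᵐ ω ∂μ, |G ω| ≤ C)
    (hHb : ∃ C, ∀ᵐ ω ∂μ, |H ω| ≤ C) (hRb : ∃ C, ∀ᵐ ω ∂μ, |R ω| ≤ C) :
    μ[(fun ω => F ω * (T ω * Y ω) + G ω * ((1 - T ω) * Y ω) + H ω * T ω + R ω) | m]
      =ᵐ[μ] fun ω => F ω * (P ω * M1 ω) + G ω * ((1 - P ω) * M0 ω) + H ω * P ω + R ω := by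
  obtain ⟨CF, hCF⟩ := hFb
  obtain ⟨CG, hCG⟩ := hGb
  obtain ⟨CH, hCH⟩ := hHb
  obtain ⟨CR, hCR⟩ := hRb
  -- integrability of the four summands
  have i1 : Integrable (fun ω => F ω * (T ω * Y ω)) μ :=
    intTY.bdd_mul ((sF.mono hm).aestronglyMeasurable)
      (by simpa [Real.norm_eq_abs] using hCF)
  have i2 : Integrable (fun ω => G ω * ((1 - T ω) * Y ω)) μ :=
    int1TY.bdd_mul ((sG.mono hm).aestronglyMeasurable)
      (by simpa [Real.norm_eq_abs] using hCG)
  have i3 : Integrable (fun ω => H ω * T ω) μ :=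
    intT.bdd_mul ((sH.mono hm).aestronglyMeasurable)
      (by simpa [Real.norm_eq_abs] using hCH)
  have i4 : Integrable R μ :=
    ⟨(sR.mono hm).aestronglyMeasurable,
      HasFiniteIntegral.of_bounded (by simpa [Real.norm_eq_abs] using hCR)⟩
  -- pull-out computations
  have e1 : μ[(fun ω => F ω * (T ω * Y ω)) | m]
      =ᵐ[μ] fun ω => F ω * (P ω * M1 ω) := by
    have := condExp_stronglyMeasurable_mul_of_bound hm sF intTY CF
      (by simpa [Real.norm_eq_abs] using hCF)
    refine this.trans ?_
    filter_upwards [hm1] with ω hω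
    simp only [Pi.mul_apply]
    rw [hω]
  have e2 : μ[(fun ω => G ω * ((1 - T ω) * Y ω)) | m]
      =ᵐ[μ] fun ω => G ω * ((1 - P ω) * M0 ω) := by
    have := condExp_stronglyMeasurable_mul_of_bound hm sG int1TY CG
      (by simpa [Real.norm_eq_abs] using hCG)
    refine this.trans ?_
    filter_upwards [hm0] with ω hω
    simp only [Pi.mul_apply]
    rw [hω]
  have e3 : μ[(fun ω => H ω * T ω) | m] =ᵐ[μ] fun ω => H ω * P ω := by
    have := condExp_stronglyMeasurable_mul_of_bound hm sH intT CH
      (by simpa [Real.norm_eq_abs] using hCH)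
    refine this.trans ?_
    filter_upwards [hpcond] with ω hω
    simp only [Pi.mul_apply]
    rw [hω]
  have e4 : μ[R | m] = R := condExp_of_stronglyMeasurable hm sR i4
  -- assemble
  have a1 : μ[(fun ω => F ω * (T ω * Y ω) + G ω * ((1 - T ω) * Y ω) + H ω * T ω + R ω) | m]
      =ᵐ[μ] μ[(fun ω => F ω * (T ω * Y ω) + G ω * ((1 - T ω) * Y ω) + H ω * T ω) | m]
        + μ[R | m] :=
    condExp_add ((i1.add i2).add i3) i4 m
  have a2 : μ[(fun ω => F ω * (T ω * Y ω) + G ω * ((1 - T ω) * Y ω) + H ω * T ω) | m]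
      =ᵐ[μ] μ[(fun ω => F ω * (T ω * Y ω) + G ω * ((1 - T ω) * Y ω)) | m]
        + μ[(fun ω => H ω * T ω) | m] :=
    condExp_add (i1.add i2) i3 m
  have a3 : μ[(fun ω => F ω * (T ω * Y ω) + G ω * ((1 - T ω) * Y ω)) | m]
      =ᵐ[μ] μ[(fun ω => F ω * (T ω * Y ω)) | m]
        + μ[(fun ω => G ω * ((1 - T ω) * Y ω)) | m] :=
    condExp_add i1 i2 m
  filter_upwards [a1, a2, a3, e1, e2, e3] with ω h1 h2 h3 g1 g2 g3
  rw [h1, Pi.add_apply, h2, Pi.add_apply, h3, Pi.add_apply, g1, g2, g3, e4]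

end Helpers

set_option maxHeartbeats 1000000 in
/-- In the binary-treatment setting with propensity `p(X)` bounded away from `0` and `1` and
bounded outcome `Y`, the true-propensity score `τ_tp = ω₁(X)TY - ω₀(X)(1-T)Y` and the
efficient score `τ_ep = ω₁(X)T(Y-m₁(X)) - ω₀(X)(1-T)(Y-m₀(X)) + m₁(X) - m₀(X)` satisfy
`E[τ_tp | X] = E[τ_ep | X] = m₁(X) - m₀(X)` a.s. and `E[τ_ep² | X] ≤ E[τ_tp² | X]` a.s. -/
theorem binary_scores_conditional_moments
    {Ω 𝒳 : Type*} [MeasurableSpace Ω] [MeasurableSpace 𝒳]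
    (μ : Measure Ω) [IsProbabilityMeasure μ]
    (X : Ω → 𝒳) (T Y : Ω → ℝ)
    (hX : Measurable X) (hT : Measurable T) (hY : Measurable Y)
    (hTbin : ∀ ω, T ω = 0 ∨ T ω = 1)
    (M : ℝ) (hYbd : ∀ ω, |Y ω| ≤ M)
    (p m1 m0 : 𝒳 → ℝ) (hpmeas : Measurable p)
    (hm1meas : Measurable m1) (hm0meas : Measurable m0)
    (δ : ℝ) (hδ : 0 < δ) (hp : ∀ x, δ ≤ p x ∧ p x ≤ 1 - δ)
    -- `p(X) = P(T=1|X)`: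
    (hpcond : μ[T | MeasurableSpace.comap X inferInstance]
      =ᵐ[μ] fun ω => p (X ω))
    -- `m₁(X)` and `m₀(X)` are the conditional means of `Y` given `T = 1`, resp. `T = 0`:
    (hm1 : μ[(fun ω => T ω * Y ω) | MeasurableSpace.comap X inferInstance]
      =ᵐ[μ] fun ω => p (X ω) * m1 (X ω))
    (hm0 : μ[(fun ω => (1 - T ω) * Y ω) | MeasurableSpace.comap X inferInstance]
      =ᵐ[μ] fun ω => (1 - p (X ω)) * m0 (X ω))
    (τtp τep : Ω → ℝ)
    (hτtp : τtp = fun ω =>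
      (1 / p (X ω)) * T ω * Y ω - (1 / (1 - p (X ω))) * (1 - T ω) * Y ω)
    (hτep : τep = fun ω =>
      (1 / p (X ω)) * T ω * (Y ω - m1 (X ω))
        - (1 / (1 - p (X ω))) * (1 - T ω) * (Y ω - m0 (X ω))
        + m1 (X ω) - m0 (X ω)) :
    (μ[τtp | MeasurableSpace.comap X inferInstance]
      =ᵐ[μ] fun ω => m1 (X ω) - m0 (X ω)) ∧
    (μ[τep | MeasurableSpace.comap X inferInstance]
      =ᵐ[μ] fun ω => m1 (X ω) - m0 (X ω)) ∧
    (∀ᵐ ω ∂μ,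
      (μ[(fun ω' => (τep ω') ^ 2) | MeasurableSpace.comap X inferInstance]) ω
        ≤ (μ[(fun ω' => (τtp ω') ^ 2) | MeasurableSpace.comap X inferInstance]) ω) := by
  have hm : MeasurableSpace.comap X inferInstance ≤ _ := hX.comap_le
  have hXm : Measurable[MeasurableSpace.comap X inferInstance] X :=
    Measurable.of_comap_le le_rfl
  -- basic facts about `p`
  have hp0 : ∀ x, (0:ℝ) < p x := fun x => lt_of_lt_of_le hδ (hp x).1
  have hp1 : ∀ x, (0:ℝ) < 1 - p x := fun x => lt_of_lt_of_le hδ (by linarith [(hp x).2])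
  have hpne : ∀ x, p x ≠ 0 := fun x => (hp0 x).ne'
  have hp1ne : ∀ x, (1:ℝ) - p x ≠ 0 := fun x => (hp1 x).ne'
  -- bounds
  set M' := max M 0 with hM'def
  have hM'0 : (0:ℝ) ≤ M' := le_max_right _ _
  have hY' : ∀ ω, |Y ω| ≤ M' := fun ω => (hYbd ω).trans (le_max_left _ _)
  have hTb : ∀ ω, |T ω| ≤ 1 := by
    intro ω; rcases hTbin ω with h | h <;> simp [h]
  have h1Tb : ∀ ω, |1 - T ω| ≤ 1 := by
    intro ω; rcases hTbin ω with h | h <;> simp [h]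
  have hTYb : ∀ ω, |T ω * Y ω| ≤ M' := by
    intro ω; rw [abs_mul]
    calc |T ω| * |Y ω| ≤ 1 * M' := mul_le_mul (hTb ω) (hY' ω) (abs_nonneg _) zero_le_one
    _ = M' := one_mul _
  have h1TYb : ∀ ω, |(1 - T ω) * Y ω| ≤ M' := by
    intro ω; rw [abs_mul]
    calc |1 - T ω| * |Y ω| ≤ 1 * M' := mul_le_mul (h1Tb ω) (hY' ω) (abs_nonneg _) zero_le_one
    _ = M' := one_mul _
  -- integrability of base functions
  have intTY : Integrable (fun ω => T ω * Y ω) μ :=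
    int_of_aebdd ((hT.mul hY).aestronglyMeasurable) (ae_of_all _ hTYb)
  have int1TY : Integrable (fun ω => (1 - T ω) * Y ω) μ :=
    int_of_aebdd (((measurable_const.sub hT).mul hY).aestronglyMeasurable) (ae_of_all _ h1TYb)
  have intT : Integrable T μ := int_of_aebdd hT.aestronglyMeasurable (ae_of_all _ hTb)
  -- a.e. bounds on `m1 ∘ X` and `m0 ∘ X`
  have hcoe : ((M'.toNNReal : NNReal) : ℝ) = M' := Real.coe_toNNReal _ hM'0
  have c1 : ∀ᵐ ω ∂μ, |(μ[(fun ω => T ω * Y ω) | MeasurableSpace.comap X inferInstance]) ω|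
      ≤ (M'.toNNReal : ℝ) :=
    ae_bdd_condExp_of_ae_bdd (ae_of_all _ fun ω => by rw [hcoe]; exact hTYb ω)
  have c0 : ∀ᵐ ω ∂μ, |(μ[(fun ω => (1 - T ω) * Y ω) | MeasurableSpace.comap X inferInstance]) ω|
      ≤ (M'.toNNReal : ℝ) :=
    ae_bdd_condExp_of_ae_bdd (ae_of_all _ fun ω => by rw [hcoe]; exact h1TYb ω)
  have bM1 : ∀ᵐ ω ∂μ, |m1 (X ω)| ≤ M' / δ := by
    filter_upwards [c1, hm1] with ω h1 h2
    rw [h2, hcoe] at h1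
    rw [le_div_iff₀ hδ]
    calc |m1 (X ω)| * δ ≤ |m1 (X ω)| * p (X ω) :=
          mul_le_mul_of_nonneg_left (hp (X ω)).1 (abs_nonneg _)
    _ = |p (X ω) * m1 (X ω)| := by
          rw [abs_mul, abs_of_pos (hp0 (X ω))]; ring
    _ ≤ M' := h1
  have bM0 : ∀ᵐ ω ∂μ, |m0 (X ω)| ≤ M' / δ := by
    filter_upwards [c0, hm0] with ω h1 h2
    rw [h2, hcoe] at h1
    rw [le_div_iff₀ hδ]
    calc |m0 (X ω)| * δ ≤ |m0 (X ω)| * (1 - p (X ω)) :=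
          mul_le_mul_of_nonneg_left (by linarith [(hp (X ω)).2]) (abs_nonneg _)
    _ = |(1 - p (X ω)) * m0 (X ω)| := by
          rw [abs_mul, abs_of_pos (hp1 (X ω))]; ring
    _ ≤ M' := h1
  -- bounded building blocks (in ∃-form)
  have pA : ∃ C, ∀ᵐ ω ∂μ, |1 / p (X ω)| ≤ C := by
    refine ⟨1 / δ, ae_of_all _ fun ω => ?_⟩
    rw [abs_of_pos (by have := hp0 (X ω); positivity)]
    exact one_div_le_one_div_of_le hδ (hp (X ω)).1
  have pB : ∃ C, ∀ᵐ ω ∂μ, |1 / (1 - p (X ω))| ≤ C := by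
    refine ⟨1 / δ, ae_of_all _ fun ω => ?_⟩
    rw [abs_of_pos (by have := hp1 (X ω); positivity)]
    exact one_div_le_one_div_of_le hδ (by linarith [(hp (X ω)).2])
  have pM1 : ∃ C, ∀ᵐ ω ∂μ, |m1 (X ω)| ≤ C := ⟨M' / δ, bM1⟩
  have pM0 : ∃ C, ∀ᵐ ω ∂μ, |m0 (X ω)| ≤ C := ⟨M' / δ, bM0⟩
  have pT : ∃ C, ∀ᵐ ω ∂μ, |T ω| ≤ C := ⟨1, ae_of_all _ hTb⟩
  have pY : ∃ C, ∀ᵐ ω ∂μ, |Y ω| ≤ C := ⟨M', ae_of_all _ hY'⟩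
  have pC : ∀ c : ℝ, ∃ C, ∀ᵐ ω ∂μ, |(fun _ : Ω => c) ω| ≤ C := fun c => ⟨|c|, ae_of_all _ fun _ => le_rfl⟩
  -- measurable building blocks (w.r.t. the comap σ-algebra)
  have sA : StronglyMeasurable[MeasurableSpace.comap X inferInstance]
      (fun ω => 1 / p (X ω)) := ((measurable_const.div (hpmeas.comp hXm))).stronglyMeasurable
  have sB : StronglyMeasurable[MeasurableSpace.comap X inferInstance]
      (fun ω => 1 / (1 - p (X ω))) :=
    ((measurable_const.div (measurable_const.sub (hpmeas.comp hXm)))).stronglyMeasurable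
  have sM1 : StronglyMeasurable[MeasurableSpace.comap X inferInstance]
      (fun ω => m1 (X ω)) := (hm1meas.comp hXm).stronglyMeasurable
  have sM0 : StronglyMeasurable[MeasurableSpace.comap X inferInstance]
      (fun ω => m0 (X ω)) := (hm0meas.comp hXm).stronglyMeasurable
  have p1T : ∃ C, ∀ᵐ ω ∂μ, |1 - T ω| ≤ C := ⟨1, ae_of_all _ h1Tb⟩
  have pCn2 : ∃ C, ∀ᵐ ω ∂μ, |(-2 : ℝ)| ≤ C := ⟨2, ae_of_all _ fun _ => by norm_num⟩
  have pC2 : ∃ C, ∀ᵐ ω ∂μ, |(2 : ℝ)| ≤ C := ⟨2, ae_of_all _ fun _ => by norm_num⟩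
  -- Part 1 : conditional expectation of τtp
  have key1 := master_condexp μ hm T Y intTY int1TY intT
      (fun ω => p (X ω)) (fun ω => m1 (X ω)) (fun ω => m0 (X ω)) hpcond hm1 hm0
      (fun ω => 1 / p (X ω)) (fun ω => -(1 / (1 - p (X ω))))
      (fun _ => (0:ℝ)) (fun _ => (0:ℝ))
      sA sB.neg stronglyMeasurable_const stronglyMeasurable_const
      pA (aebdd_neg pB) (pC 0) (pC 0)
  have goal1 : μ[τtp | MeasurableSpace.comap X inferInstance]
      =ᵐ[μ] fun ω => m1 (X ω) - m0 (X ω) := by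
    have hfe : τtp = fun ω => (1 / p (X ω)) * (T ω * Y ω)
        + (-(1 / (1 - p (X ω)))) * ((1 - T ω) * Y ω)
        + (0:ℝ) * T ω + (0:ℝ) := by
      rw [hτtp]; funext ω; ring
    rw [hfe]
    refine key1.trans (ae_of_all _ fun ω => ?_)
    have h0 := hpne (X ω); have h1 := hp1ne (X ω)
    field_simp
    ring
  -- Part 2 : conditional expectation of τep
  have key2 := master_condexp μ hm T Y intTY int1TY intT
      (fun ω => p (X ω)) (fun ω => m1 (X ω)) (fun ω => m0 (X ω)) hpcond hm1 hm0
      (fun ω => 1 / p (X ω)) (fun ω => -(1 / (1 - p (X ω))))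
      (fun ω => -((1 / p (X ω)) * m1 (X ω)) - (1 / (1 - p (X ω))) * m0 (X ω))
      (fun ω => (1 / (1 - p (X ω))) * m0 (X ω) + m1 (X ω) - m0 (X ω))
      sA sB.neg ((sA.mul sM1).neg.sub (sB.mul sM0)) (((sB.mul sM0).add sM1).sub sM0)
      pA (aebdd_neg pB)
      (aebdd_sub (aebdd_neg (aebdd_mul pA pM1)) (aebdd_mul pB pM0))
      (aebdd_sub (aebdd_add (aebdd_mul pB pM0) pM1) pM0)
  have goal2 : μ[τep | MeasurableSpace.comap X inferInstance]
      =ᵐ[μ] fun ω => m1 (X ω) - m0 (X ω) := by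
    have hfe : τep = fun ω => (1 / p (X ω)) * (T ω * Y ω)
        + (-(1 / (1 - p (X ω)))) * ((1 - T ω) * Y ω)
        + (-((1 / p (X ω)) * m1 (X ω)) - (1 / (1 - p (X ω))) * m0 (X ω)) * T ω
        + ((1 / (1 - p (X ω))) * m0 (X ω) + m1 (X ω) - m0 (X ω)) := by
      rw [hτep]; funext ω; ring
    rw [hfe]
    refine key2.trans (ae_of_all _ fun ω => ?_)
    have h0 := hpne (X ω); have h1 := hp1ne (X ω)
    field_simp
    ring
  -- Part 3 : the variance inequality
  have sK1 : StronglyMeasurable[MeasurableSpace.comap X inferInstance]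
      (fun ω => m1 (X ω) - m0 (X ω) - (1 / p (X ω)) * m1 (X ω)) :=
    (sM1.sub sM0).sub (sA.mul sM1)
  have sK0 : StronglyMeasurable[MeasurableSpace.comap X inferInstance]
      (fun ω => (1 / (1 - p (X ω))) * m0 (X ω) + m1 (X ω) - m0 (X ω)) :=
    ((sB.mul sM0).add sM1).sub sM0
  have bK1 : ∃ C, ∀ᵐ ω ∂μ, |m1 (X ω) - m0 (X ω) - (1 / p (X ω)) * m1 (X ω)| ≤ C :=
    aebdd_sub (aebdd_sub pM1 pM0) (aebdd_mul pA pM1)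
  have bK0 : ∃ C, ∀ᵐ ω ∂μ, |(1 / (1 - p (X ω))) * m0 (X ω) + m1 (X ω) - m0 (X ω)| ≤ C :=
    aebdd_sub (aebdd_add (aebdd_mul pB pM0) pM1) pM0
  have key3 := master_condexp μ hm T Y intTY int1TY intT
      (fun ω => p (X ω)) (fun ω => m1 (X ω)) (fun ω => m0 (X ω)) hpcond hm1 hm0
      (fun ω => -2 * (1 / p (X ω)) * (m1 (X ω) - m0 (X ω) - (1 / p (X ω)) * m1 (X ω)))
      (fun ω => 2 * (1 / (1 - p (X ω)))
        * ((1 / (1 - p (X ω))) * m0 (X ω) + m1 (X ω) - m0 (X ω)))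
      (fun ω => ((1 / (1 - p (X ω))) * m0 (X ω) + m1 (X ω) - m0 (X ω)) ^ 2
        - (m1 (X ω) - m0 (X ω) - (1 / p (X ω)) * m1 (X ω)) ^ 2)
      (fun ω => -(((1 / (1 - p (X ω))) * m0 (X ω) + m1 (X ω) - m0 (X ω)) ^ 2))
      ((stronglyMeasurable_const.mul sA).mul sK1)
      ((stronglyMeasurable_const.mul sB).mul sK0)
      ((sK0.pow 2).sub (sK1.pow 2)) ((sK0.pow 2).neg)
      (aebdd_mul (aebdd_mul pCn2 pA) bK1)
      (aebdd_mul (aebdd_mul pC2 pB) bK0)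
      (aebdd_sub (aebdd_sq bK0) (aebdd_sq bK1))
      (aebdd_neg (aebdd_sq bK0))
  -- measurability and integrability of the squared scores
  have hmτtp : Measurable τtp := by
    rw [hτtp]
    exact (((measurable_const.div (hpmeas.comp hX)).mul hT).mul hY).sub
      (((measurable_const.div (measurable_const.sub (hpmeas.comp hX))).mul
        (measurable_const.sub hT)).mul hY)
  have hmτep : Measurable τep := by
    rw [hτep]
    exact (((((measurable_const.div (hpmeas.comp hX)).mul hT).mul
        (hY.sub (hm1meas.comp hX))).sub
      (((measurable_const.div (measurable_const.sub (hpmeas.comp hX))).mul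
        (measurable_const.sub hT)).mul (hY.sub (hm0meas.comp hX)))).add
        (hm1meas.comp hX)).sub (hm0meas.comp hX)
  have bτtp : ∃ C, ∀ᵐ ω ∂μ, |τtp ω| ≤ C := by
    simp only [hτtp]
    exact aebdd_sub (aebdd_mul (aebdd_mul pA pT) pY) (aebdd_mul (aebdd_mul pB p1T) pY)
  have bτep : ∃ C, ∀ᵐ ω ∂μ, |τep ω| ≤ C := by
    simp only [hτep]
    exact aebdd_sub (aebdd_add (aebdd_sub
      (aebdd_mul (aebdd_mul pA pT) (aebdd_sub pY pM1))
      (aebdd_mul (aebdd_mul pB p1T) (aebdd_sub pY pM0))) pM1) pM0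
  have int_tp2 : Integrable (fun ω' => τtp ω' ^ 2) μ := by
    obtain ⟨C, hC⟩ := aebdd_sq bτtp
    exact int_of_aebdd ((hmτtp.pow_const 2).aestronglyMeasurable) hC
  have int_ep2 : Integrable (fun ω' => τep ω' ^ 2) μ := by
    obtain ⟨C, hC⟩ := aebdd_sq bτep
    exact int_of_aebdd ((hmτep.pow_const 2).aestronglyMeasurable) hC
  -- pointwise identity for the difference of squares
  have hdiff : (fun ω => τtp ω ^ 2 - τep ω ^ 2) = fun ω =>
      (-2 * (1 / p (X ω)) * (m1 (X ω) - m0 (X ω) - (1 / p (X ω)) * m1 (X ω)))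
        * (T ω * Y ω)
      + (2 * (1 / (1 - p (X ω)))
        * ((1 / (1 - p (X ω))) * m0 (X ω) + m1 (X ω) - m0 (X ω))) * ((1 - T ω) * Y ω)
      + (((1 / (1 - p (X ω))) * m0 (X ω) + m1 (X ω) - m0 (X ω)) ^ 2
        - (m1 (X ω) - m0 (X ω) - (1 / p (X ω)) * m1 (X ω)) ^ 2) * T ω
      + (-(((1 / (1 - p (X ω))) * m0 (X ω) + m1 (X ω) - m0 (X ω)) ^ 2)) := by
    funext ω
    have h0 := hpne (X ω); have h1 := hp1ne (X ω)
    rcases hTbin ω with h | h <;>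
      · simp only [hτtp, hτep, h]
        field_simp
        ring
  have E2 : μ[(fun ω => τtp ω ^ 2 - τep ω ^ 2) | MeasurableSpace.comap X inferInstance]
      =ᵐ[μ] fun ω => p (X ω) * (m1 (X ω) - m0 (X ω) - (1 / p (X ω)) * m1 (X ω)) ^ 2
        + (1 - p (X ω)) * ((1 / (1 - p (X ω))) * m0 (X ω) + m1 (X ω) - m0 (X ω)) ^ 2 := by
    rw [hdiff]
    refine key3.trans (ae_of_all _ fun ω => ?_)
    have h0 := hpne (X ω); have h1 := hp1ne (X ω)
    field_simp
    ring
  have E1 : μ[(fun ω => τtp ω ^ 2 - τep ω ^ 2) | MeasurableSpace.comap X inferInstance]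
      =ᵐ[μ] μ[(fun ω' => τtp ω' ^ 2) | MeasurableSpace.comap X inferInstance]
        - μ[(fun ω' => τep ω' ^ 2) | MeasurableSpace.comap X inferInstance] :=
    (condExp_congr_ae (ae_of_all _ fun ω => rfl)).trans (condExp_sub int_tp2 int_ep2 _)
  refine ⟨goal1, goal2, ?_⟩
  filter_upwards [E1, E2] with ω h1 h2
  rw [Pi.sub_apply] at h1
  have h5 : (0:ℝ) ≤ p (X ω) * (m1 (X ω) - m0 (X ω) - (1 / p (X ω)) * m1 (X ω)) ^ 2
      + (1 - p (X ω)) * ((1 / (1 - p (X ω))) * m0 (X ω) + m1 (X ω) - m0 (X ω)) ^ 2 :=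
    add_nonneg (mul_nonneg (hp0 (X ω)).le (sq_nonneg _))
      (mul_nonneg (hp1 (X ω)).le (sq_nonneg _))
  linarith [h1.symm.trans h2]
end

section
/- Under the setting of the previous statement, for any two measurable policies π, π': 𝒳 → {0,1}, E[(τ_ep·(π(X)-π'(X)) - E[τ_ep(π-π')])²] ≤ E[(τ_tp·(π(X)-π'(X)) - E[τ_tp(π-π')])²]; i.e., the increments of the centered efficient-score process have pointwise smaller variance than those of the true-propensity process. -/
open MeasureTheory ProbabilityTheory

/-- Key computation: for `f ∈ L²` and `d` bounded, σ(X)-measurable,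
`∫ (f·d - ∫ f·d)² = ∫ d²·E[f²|m] - (∫ d·E[f|m])²`. -/
theorem aux_expand
    {Ω : Type*} {m m0 : MeasurableSpace Ω}
    (μ : @Measure Ω m0) [IsProbabilityMeasure μ]
    (hm : m ≤ m0)
    (f d : Ω → ℝ) (hf2 : MemLp f 2 μ)
    (hd_m : StronglyMeasurable[m] d) (hd_bd : ∀ ω, |d ω| ≤ 1) :
    ∫ ω, (f ω * d ω - ∫ ω', f ω' * d ω' ∂μ) ^ 2 ∂μ
      = (∫ ω, d ω ^ 2 * (μ[(fun ω' => f ω' ^ 2) | m]) ω ∂μ)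
        - (∫ ω, d ω * (μ[f | m]) ω ∂μ) ^ 2 := by
  have hd_meas : AEStronglyMeasurable d μ := (hd_m.mono hm).aestronglyMeasurable
  have hfd2 : MemLp (fun ω => f ω * d ω) 2 μ := by
    refine hf2.of_le (hf2.1.mul hd_meas) ?_
    refine ae_of_all _ fun ω => ?_
    rw [Real.norm_eq_abs, Real.norm_eq_abs, abs_mul]
    calc |f ω| * |d ω| ≤ |f ω| * 1 := by
          exact mul_le_mul_of_nonneg_left (hd_bd ω) (abs_nonneg _)
      _ = |f ω| := mul_one _
  have hf_int : Integrable f μ := hf2.integrable one_le_two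
  have hf2_int : Integrable (fun ω => f ω ^ 2) μ := hf2.integrable_sq
  have hfd_int : Integrable (fun ω => f ω * d ω) μ := hfd2.integrable one_le_two
  -- first moment
  have h1 : ∫ ω, f ω * d ω ∂μ = ∫ ω, d ω * (μ[f | m]) ω ∂μ := by
    have hdf_int : Integrable (d * f) μ := by
      refine Integrable.bdd_mul (c := 1) hf_int hd_meas (ae_of_all _ fun ω => ?_)
      simpa using hd_bd ω
    have := condExp_mul_of_stronglyMeasurable_left hd_m hdf_int hf_int
    calc ∫ ω, f ω * d ω ∂μ = ∫ ω, (d * f) ω ∂μ := by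
          simp [mul_comm]
      _ = ∫ ω, (μ[d * f | m]) ω ∂μ := (integral_condExp hm).symm
      _ = ∫ ω, (d * μ[f | m]) ω ∂μ := integral_congr_ae this
      _ = ∫ ω, d ω * (μ[f | m]) ω ∂μ := rfl
  -- second moment
  have h2 : ∫ ω, (f ω * d ω) ^ 2 ∂μ
      = ∫ ω, d ω ^ 2 * (μ[(fun ω' => f ω' ^ 2) | m]) ω ∂μ := by
    have hd2_m : StronglyMeasurable[m] (fun ω => d ω ^ 2) := hd_m.pow 2
    have hint : Integrable ((fun ω => d ω ^ 2) * fun ω => f ω ^ 2) μ := by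
      refine Integrable.bdd_mul (c := 1) hf2_int
        (hd_meas.pow 2) (ae_of_all _ fun ω => ?_)
      rw [Real.norm_eq_abs, abs_pow]
      calc |d ω| ^ 2 ≤ 1 ^ 2 := pow_le_pow_left₀ (abs_nonneg _) (hd_bd ω) 2
        _ = 1 := one_pow 2
    have := condExp_mul_of_stronglyMeasurable_left hd2_m hint hf2_int
    calc ∫ ω, (f ω * d ω) ^ 2 ∂μ
        = ∫ ω, ((fun ω => d ω ^ 2) * fun ω => f ω ^ 2) ω ∂μ := by
          congr 1; ext ω; simp [mul_pow]; ring
      _ = ∫ ω, (μ[(fun ω => d ω ^ 2) * fun ω => f ω ^ 2 | m]) ω ∂μ :=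
          (integral_condExp hm).symm
      _ = ∫ ω, ((fun ω => d ω ^ 2) * μ[(fun ω' => f ω' ^ 2) | m]) ω ∂μ :=
          integral_congr_ae this
      _ = ∫ ω, d ω ^ 2 * (μ[(fun ω' => f ω' ^ 2) | m]) ω ∂μ := rfl
  have hvar := variance_eq_sub hfd2
  have hvar' := variance_eq_integral hfd2.aemeasurable
  rw [hvar'] at hvar
  have : ∫ ω, (f ω * d ω - ∫ ω', f ω' * d ω' ∂μ) ^ 2 ∂μ
      = (∫ ω, (f ω * d ω) ^ 2 ∂μ) - (∫ ω, f ω * d ω ∂μ) ^ 2 := by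
    simpa [Pi.pow_apply, Pi.sub_apply] using hvar
  rw [this, h1, h2]
/-- If `τ_tp` and `τ_ep` have the same conditional mean given `X` and
`E[τ_ep² | X] ≤ E[τ_tp² | X]` a.s., then for any two binary-valued policies `π, π'` the
centered increments satisfy
`E[(τ_ep·(π(X)-π'(X)) - E[τ_ep(π-π')])²] ≤ E[(τ_tp·(π(X)-π'(X)) - E[τ_tp(π-π')])²]`. -/
theorem increments_variance_comparison
    {Ω 𝒳 : Type*} [MeasurableSpace Ω] [MeasurableSpace 𝒳]
    (μ : Measure Ω) [IsProbabilityMeasure μ]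
    (X : Ω → 𝒳) (hX : Measurable X)
    (τtp τep : Ω → ℝ) (hτtpmeas : Measurable τtp) (hτepmeas : Measurable τep)
    (hτtp2 : MemLp τtp 2 μ) (hτep2 : MemLp τep 2 μ)
    (hmean : μ[τtp | MeasurableSpace.comap X inferInstance]
      =ᵐ[μ] μ[τep | MeasurableSpace.comap X inferInstance])
    (hvar : ∀ᵐ ω ∂μ,
      (μ[(fun ω' => (τep ω') ^ 2) | MeasurableSpace.comap X inferInstance]) ω
        ≤ (μ[(fun ω' => (τtp ω') ^ 2) | MeasurableSpace.comap X inferInstance]) ω)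
    (π π' : 𝒳 → ℝ) (hπmeas : Measurable π) (hπ'meas : Measurable π')
    (hπbin : ∀ x, π x = 0 ∨ π x = 1) (hπ'bin : ∀ x, π' x = 0 ∨ π' x = 1) :
    ∫ ω, (τep ω * (π (X ω) - π' (X ω))
        - ∫ ω', τep ω' * (π (X ω') - π' (X ω')) ∂μ) ^ 2 ∂μ
      ≤ ∫ ω, (τtp ω * (π (X ω) - π' (X ω))
        - ∫ ω', τtp ω' * (π (X ω') - π' (X ω')) ∂μ) ^ 2 ∂μ := by

  have hm := hX.comap_le
  set m := MeasurableSpace.comap X inferInstance with hm_def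
  have hXm : Measurable[m] X := fun s hs => ⟨s, hs, rfl⟩
  set d : Ω → ℝ := fun ω => π (X ω) - π' (X ω) with hd_def
  have hd_m : StronglyMeasurable[m] d :=
    ((hπmeas.comp hXm).sub (hπ'meas.comp hXm)).stronglyMeasurable
  have hd_bd : ∀ ω, |d ω| ≤ 1 := by
    intro ω
    rcases hπbin (X ω) with h | h <;> rcases hπ'bin (X ω) with h' | h' <;>
      simp [hd_def, h, h']
  have hep := aux_expand μ hm τep d hτep2 hd_m hd_bd
  have htp := aux_expand μ hm τtp d hτtp2 hd_m hd_bd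
  have key1 : ∫ ω, d ω * (μ[τep | m]) ω ∂μ = ∫ ω, d ω * (μ[τtp | m]) ω ∂μ :=
    integral_congr_ae (hmean.mono fun ω h => by dsimp only; rw [h])
  have key2 : ∫ ω, d ω ^ 2 * (μ[(fun ω' => τep ω' ^ 2) | m]) ω ∂μ
      ≤ ∫ ω, d ω ^ 2 * (μ[(fun ω' => τtp ω' ^ 2) | m]) ω ∂μ := by
    have hd2bd : ∀ᵐ ω ∂μ, ‖d ω ^ 2‖ ≤ 1 := ae_of_all _ fun ω => by
      rw [Real.norm_eq_abs, abs_pow]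
      calc |d ω| ^ 2 ≤ 1 ^ 2 := pow_le_pow_left₀ (abs_nonneg _) (hd_bd ω) 2
        _ = 1 := one_pow 2
    have hd2meas :=
      ((hd_m.mono hm).measurable.pow_const 2).aestronglyMeasurable (μ := μ)
    refine integral_mono_ae
      (Integrable.bdd_mul (c := 1) integrable_condExp hd2meas hd2bd)
      (Integrable.bdd_mul (c := 1) integrable_condExp hd2meas hd2bd) ?_
    filter_upwards [hvar] with ω hω
    exact mul_le_mul_of_nonneg_left hω (sq_nonneg _)
  have heq : ∀ τ : Ω → ℝ,
      (fun ω => (τ ω * (π (X ω) - π' (X ω))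
          - ∫ ω', τ ω' * (π (X ω') - π' (X ω')) ∂μ) ^ 2)
        = fun ω => (τ ω * d ω - ∫ ω', τ ω' * d ω' ∂μ) ^ 2 := fun τ => rfl
  rw [heq τep, heq τtp, hep, htp, key1]
  exact sub_le_sub_right key2 _
end

section
/- Let ω: 𝒯×𝒳 → ℝ be defined by ω(t,x) = 1/f(t|x) where f is the conditional density of T given X with respect to a σ-finite measure μ on 𝒯, bounded below by f̲ > 0. Then for all bounded measurable u: 𝒯 → ℝ and v: 𝒳 → ℝ, E[ω(T,X) u(T) v(X)] = (∫ u dμ) · E[v(X)]. Conversely, if a bounded measurable ω̃ satisfies this equation for all such u, v, then ω̃(T,X) = ω(T,X) almost surely. -/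
open MeasureTheory ProbabilityTheory


lemma abs_mul3_le' {a b c A B C : ℝ} (ha : |a| ≤ A) (hb : |b| ≤ B) (hc : |c| ≤ C) :
    |a * b * c| ≤ A * B * C := by
  have hA : (0:ℝ) ≤ A := (abs_nonneg a).trans ha
  have hB : (0:ℝ) ≤ B := (abs_nonneg b).trans hb
  calc |a * b * c| = |a| * |b| * |c| := by rw [abs_mul, abs_mul]
    _ ≤ A * B * C :=
      mul_le_mul (mul_le_mul ha hb (abs_nonneg b) hA) hc (abs_nonneg c) (mul_nonneg hA hB)


/-- Balancing characterization of the stabilized weight `ω(t,x) = 1/f(t|x)`: it satisfies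
`E[ω(T,X)u(T)v(X)] = (∫ u dν)·E[v(X)]` for all bounded measurable `u, v`; conversely, any
bounded measurable `ω̃` satisfying these equations agrees with `ω(T,X)` almost surely. -/
theorem stabilized_weight_balancing_characterization
    {Ω 𝒯 𝒳 : Type*} [MeasurableSpace Ω] [MeasurableSpace 𝒯] [MeasurableSpace 𝒳]
    (μ : Measure Ω) [IsProbabilityMeasure μ]
    (ν : Measure 𝒯) [IsFiniteMeasure ν]
    (T : Ω → 𝒯) (X : Ω → 𝒳) (hT : Measurable T) (hX : Measurable X)
    (f : 𝒯 → 𝒳 → ℝ) (hf : Measurable (Function.uncurry f))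
    (fbar : ℝ) (hfbar : 0 < fbar) (hflb : ∀ t x, fbar ≤ f t x)
    -- `f(·|x)` is a probability density with respect to `ν` for each `x`:
    (hfdens : ∀ x, ∫ t, f t x ∂ν = 1)
    -- `f(·|x)` is the conditional density of `T` given `X` with respect to `ν`:
    (hdens : ∀ g : 𝒯 → 𝒳 → ℝ, Measurable (Function.uncurry g) →
      (∃ C, ∀ t x, |g t x| ≤ C) →
      ∫ ω, g (T ω) (X ω) ∂μ = ∫ ω, ∫ t, g t (X ω) * f t (X ω) ∂ν ∂μ) :
    (∀ (u : 𝒯 → ℝ) (v : 𝒳 → ℝ), Measurable u → Measurable v →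
      (∃ Cu, ∀ t, |u t| ≤ Cu) → (∃ Cv, ∀ x, |v x| ≤ Cv) →
      ∫ ω, (1 / f (T ω) (X ω)) * u (T ω) * v (X ω) ∂μ
        = (∫ t, u t ∂ν) * ∫ ω, v (X ω) ∂μ) ∧
    (∀ ωtilde : 𝒯 → 𝒳 → ℝ, Measurable (Function.uncurry ωtilde) →
      (∃ C, ∀ t x, |ωtilde t x| ≤ C) →
      (∀ (u : 𝒯 → ℝ) (v : 𝒳 → ℝ), Measurable u → Measurable v →
        (∃ Cu, ∀ t, |u t| ≤ Cu) → (∃ Cv, ∀ x, |v x| ≤ Cv) →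
        ∫ ω, ωtilde (T ω) (X ω) * u (T ω) * v (X ω) ∂μ
          = (∫ t, u t ∂ν) * ∫ ω, v (X ω) ∂μ) →
      ∀ᵐ ω ∂μ, ωtilde (T ω) (X ω) = 1 / f (T ω) (X ω)) := by
  have h0f : ∀ t x, 0 < f t x := fun t x => lt_of_lt_of_le hfbar (hflb t x)
  have hinvb : ∀ t x, |1 / f t x| ≤ 1 / fbar := by
    intro t x
    rw [abs_of_pos (one_div_pos.mpr (h0f t x))]
    exact one_div_le_one_div_of_le hfbar (hflb t x)
  -- Part 1
  have part1 : ∀ (u : 𝒯 → ℝ) (v : 𝒳 → ℝ), Measurable u → Measurable v →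
      (∃ Cu, ∀ t, |u t| ≤ Cu) → (∃ Cv, ∀ x, |v x| ≤ Cv) →
      ∫ ω, (1 / f (T ω) (X ω)) * u (T ω) * v (X ω) ∂μ
        = (∫ t, u t ∂ν) * ∫ ω, v (X ω) ∂μ := by
    intro u v hu hv ⟨Cu, hCu⟩ ⟨Cv, hCv⟩
    have hg : Measurable (Function.uncurry fun t x => (1 / f t x) * u t * v x) := by
      show Measurable fun p : 𝒯 × 𝒳 => (1 / f p.1 p.2) * u p.1 * v p.2
      exact ((measurable_const.div hf).mul (hu.comp measurable_fst)).mul (hv.comp measurable_snd)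
    have hgb : ∃ C, ∀ t x, |(1 / f t x) * u t * v x| ≤ C :=
      ⟨(1 / fbar) * Cu * Cv, fun t x => abs_mul3_le' (hinvb t x) (hCu t) (hCv x)⟩
    have h := hdens _ hg hgb
    rw [h]
    have hinner : ∀ x, ∫ t, (1 / f t x) * u t * v x * f t x ∂ν = (∫ t, u t ∂ν) * v x := by
      intro x
      have : ∀ t, (1 / f t x) * u t * v x * f t x = u t * v x := by
        intro t
        have hne := (h0f t x).ne'
        field_simp
      simp only [this]
      rw [integral_mul_const]
    simp only [hinner]
    exact integral_const_mul _ _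
  refine ⟨part1, ?_⟩
  intro ωt hωt hCb hbal
  obtain ⟨C0, hC0⟩ := hCb
  set C := max C0 0 with hCdef
  have hC : ∀ t x, |ωt t x| ≤ C := fun t x => (hC0 t x).trans (le_max_left _ _)
  have hCnn : (0:ℝ) ≤ C := le_max_right _ _
  have hfint : ∀ x, Integrable (fun t => f t x) ν := by
    intro x
    by_contra h
    have h1 := hfdens x
    rw [integral_undef h] at h1
    norm_num at h1
  have hfslice_m : ∀ x, Measurable fun t => f t x := fun x =>
    hf.comp (measurable_id.prodMk measurable_const)
  have hωtslice_m : ∀ x, Measurable fun t => ωt t x := fun x =>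
    hωt.comp (measurable_id.prodMk measurable_const)
  have hintμ : ∀ (g : Ω → ℝ) (c : ℝ), Measurable g → (∀ ω', |g ω'| ≤ c) → Integrable g μ := by
    intro g c hg hgb
    exact (integrable_const c).mono' hg.aestronglyMeasurable
      (ae_of_all _ fun ω => by simpa [Real.norm_eq_abs] using hgb ω)
  -- step 1: E[(ωt - 1/f)(T,X) u(T) v(X)] = 0
  have hzero : ∀ (u : 𝒯 → ℝ) (v : 𝒳 → ℝ), Measurable u → Measurable v →
      (∃ Cu, ∀ t, |u t| ≤ Cu) → (∃ Cv, ∀ x, |v x| ≤ Cv) →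
      ∫ ω, (ωt (T ω) (X ω) - 1 / f (T ω) (X ω)) * u (T ω) * v (X ω) ∂μ = 0 := by
    intro u v hu hv hub hvb
    obtain ⟨Cu, hCu⟩ := hub
    obtain ⟨Cv, hCv⟩ := hvb
    have h1 : Integrable (fun ω => ωt (T ω) (X ω) * u (T ω) * v (X ω)) μ := by
      apply hintμ _ (C * max Cu 0 * max Cv 0)
      · exact ((hωt.comp (hT.prodMk hX)).mul (hu.comp hT)).mul (hv.comp hX)
      · intro ω
        exact abs_mul3_le' (hC _ _) ((hCu _).trans (le_max_left _ _))
          ((hCv _).trans (le_max_left _ _))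
    have h2 : Integrable (fun ω => (1 / f (T ω) (X ω)) * u (T ω) * v (X ω)) μ := by
      apply hintμ _ ((1 / fbar) * max Cu 0 * max Cv 0)
      · exact ((measurable_const.div (hf.comp (hT.prodMk hX))).mul (hu.comp hT)).mul
          (hv.comp hX)
      · intro ω
        exact abs_mul3_le' (hinvb _ _) ((hCu _).trans (le_max_left _ _))
          ((hCv _).trans (le_max_left _ _))
    have heq : (fun ω => (ωt (T ω) (X ω) - 1 / f (T ω) (X ω)) * u (T ω) * v (X ω))
        = fun ω => ωt (T ω) (X ω) * u (T ω) * v (X ω)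
          - (1 / f (T ω) (X ω)) * u (T ω) * v (X ω) := by
      funext ω; ring
    rw [heq, integral_sub h1 h2, hbal u v hu hv ⟨Cu, hCu⟩ ⟨Cv, hCv⟩,
      part1 u v hu hv ⟨Cu, hCu⟩ ⟨Cv, hCv⟩, sub_self]
  haveI : IsProbabilityMeasure (μ.map X) := Measure.isProbabilityMeasure_map hX.aemeasurable
  have hDm2 : Measurable fun z : 𝒳 × 𝒯 => ωt z.2 z.1 * f z.2 z.1 - 1 :=
    ((hωt.comp measurable_swap).mul (hf.comp measurable_swap)).sub measurable_const
  -- step 2: key equation over μ.map X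
  have hkey : ∀ (u : 𝒯 → ℝ) (v : 𝒳 → ℝ), Measurable u → Measurable v →
      (∀ t, |u t| ≤ 1) → (∀ x, |v x| ≤ 1) →
      ∫ x, ∫ t, (ωt t x * f t x - 1) * (u t * v x) ∂ν ∂(μ.map X) = 0 := by
    intro u v hu hv hub hvb
    have hg3m : Measurable (Function.uncurry fun t x => (ωt t x - 1 / f t x) * u t * v x) := by
      show Measurable fun p : 𝒯 × 𝒳 => (ωt p.1 p.2 - 1 / f p.1 p.2) * u p.1 * v p.2
      exact ((hωt.sub (measurable_const.div hf)).mul (hu.comp measurable_fst)).mul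
        (hv.comp measurable_snd)
    have hg3b : ∃ Cg, ∀ t x, |(ωt t x - 1 / f t x) * u t * v x| ≤ Cg :=
      ⟨(C + 1 / fbar) * 1 * 1, fun t x =>
        abs_mul3_le' ((abs_sub _ _).trans (add_le_add (hC t x) (hinvb t x))) (hub t) (hvb x)⟩
    have h := hdens _ hg3m hg3b
    rw [hzero u v hu hv ⟨1, hub⟩ ⟨1, hvb⟩] at h
    have hre : ∀ x', (∫ t, (ωt t x' - 1 / f t x') * u t * v x' * f t x' ∂ν)
        = ∫ t, (ωt t x' * f t x' - 1) * (u t * v x') ∂ν := by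
      intro x'
      congr 1
      funext t
      have hne := (h0f t x').ne'
      field_simp
    simp only [hre] at h
    have hFm : Measurable fun x' => ∫ t, (ωt t x' * f t x' - 1) * (u t * v x') ∂ν := by
      have hm : Measurable fun z : 𝒳 × 𝒯 => (ωt z.2 z.1 * f z.2 z.1 - 1) * (u z.2 * v z.1) :=
        hDm2.mul ((hu.comp measurable_snd).mul (hv.comp measurable_fst))
      exact hm.stronglyMeasurable.integral_prod_right'.measurable
    rw [integral_map hX.aemeasurable hFm.aestronglyMeasurable]
    exact h.symm
  -- step 3: integrability of D on the product measure
  have hDint : Integrable (fun z : 𝒳 × 𝒯 => ωt z.2 z.1 * f z.2 z.1 - 1) ((μ.map X).prod ν) := by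
    have hslice : ∀ x, Integrable (fun t => ωt t x * f t x - 1) ν := by
      intro x
      have hi : Integrable (fun t => ωt t x * f t x) ν := by
        apply Integrable.mono' ((hfint x).const_mul C)
          (((hωtslice_m x).mul (hfslice_m x)).aestronglyMeasurable)
        refine ae_of_all _ fun t => ?_
        rw [Real.norm_eq_abs, Pi.mul_apply, abs_mul, abs_of_pos (h0f t x)]
        exact mul_le_mul_of_nonneg_right (hC t x) (h0f t x).le
      exact hi.sub (integrable_const 1)
    rw [integrable_prod_iff hDm2.aestronglyMeasurable]
    refine ⟨ae_of_all _ fun x => hslice x, ?_⟩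
    have hnm : Measurable fun x => ∫ t, ‖ωt t x * f t x - 1‖ ∂ν := by
      have hm : Measurable fun z : 𝒳 × 𝒯 => ‖ωt z.2 z.1 * f z.2 z.1 - 1‖ := hDm2.norm
      exact hm.stronglyMeasurable.integral_prod_right'.measurable
    apply (integrable_const (C * 1 + 1 * (ν Set.univ).toReal)).mono' hnm.aestronglyMeasurable
    refine ae_of_all _ fun x => ?_
    rw [Real.norm_eq_abs, abs_of_nonneg (integral_nonneg fun t => norm_nonneg _)]
    calc ∫ t, ‖ωt t x * f t x - 1‖ ∂ν ≤ ∫ t, C * f t x + 1 ∂ν := by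
          apply integral_mono (hslice x).norm (((hfint x).const_mul C).add (integrable_const 1))
          intro t
          show ‖ωt t x * f t x - 1‖ ≤ C * f t x + 1
          rw [Real.norm_eq_abs]
          calc |ωt t x * f t x - 1| ≤ |ωt t x * f t x| + 1 := by
                have := abs_sub (ωt t x * f t x) 1
                simpa using this
            _ ≤ C * f t x + 1 := by
                rw [abs_mul, abs_of_pos (h0f t x)]
                exact add_le_add_left (mul_le_mul_of_nonneg_right (hC t x) (h0f t x).le) 1
      _ = C * 1 + 1 * (ν Set.univ).toReal := by
          rw [integral_add ((hfint x).const_mul C) (integrable_const 1), integral_const_mul,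
            hfdens x, integral_const]
          simp [mul_comm, Measure.real]
  -- step 4: set integrals over rectangles vanish
  have hrect0 : ∀ (s : Set 𝒳) (A : Set 𝒯), MeasurableSet s → MeasurableSet A →
      ∫ z in s ×ˢ A, (ωt z.2 z.1 * f z.2 z.1 - 1) ∂((μ.map X).prod ν) = 0 := by
    intro s A hs hA
    have hub : ∀ t, |A.indicator (fun _ => (1:ℝ)) t| ≤ 1 := by
      intro t
      by_cases h : t ∈ A <;> simp [Set.indicator_apply, h]
    have hvb : ∀ x, |s.indicator (fun _ => (1:ℝ)) x| ≤ 1 := by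
      intro x
      by_cases h : x ∈ s <;> simp [Set.indicator_apply, h]
    rw [setIntegral_prod _ hDint.integrableOn]
    calc ∫ x in s, ∫ t in A, (ωt t x * f t x - 1) ∂ν ∂(μ.map X)
        = ∫ x, s.indicator (fun x => ∫ t in A, (ωt t x * f t x - 1) ∂ν) x ∂(μ.map X) := by
          rw [integral_indicator hs]
      _ = ∫ x, ∫ t, (ωt t x * f t x - 1)
            * (A.indicator (fun _ => (1:ℝ)) t * s.indicator (fun _ => (1:ℝ)) x) ∂ν ∂(μ.map X) := by
          congr 1
          funext x
          by_cases hxs : x ∈ s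
          · rw [Set.indicator_of_mem hxs, Set.indicator_of_mem hxs, ← integral_indicator hA]
            congr 1
            funext t
            by_cases htA : t ∈ A <;>
              simp [Set.indicator_of_mem, Set.indicator_of_notMem, htA]
          · rw [Set.indicator_of_notMem hxs, Set.indicator_of_notMem hxs]
            simp
      _ = 0 := hkey _ _ (measurable_const.indicator hA) (measurable_const.indicator hs) hub hvb
  -- step 5: the positive and negative parts agree as measures
  have hfinofReal : ∀ (g : 𝒳 × 𝒯 → ℝ), (∀ z, |g z| ≤ |ωt z.2 z.1 * f z.2 z.1 - 1|) →
      ∫⁻ z, ENNReal.ofReal (g z) ∂((μ.map X).prod ν) ≠ ⊤ := by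
    intro g hg
    apply ne_top_of_le_ne_top hDint.2.ne
    apply lintegral_mono
    intro z
    calc ENNReal.ofReal (g z) ≤ ENNReal.ofReal |g z| := ENNReal.ofReal_le_ofReal (le_abs_self _)
      _ ≤ ENNReal.ofReal |ωt z.2 z.1 * f z.2 z.1 - 1| := ENNReal.ofReal_le_ofReal (hg z)
      _ = ‖ωt z.2 z.1 * f z.2 z.1 - 1‖ₑ := (Real.enorm_eq_ofReal_abs _).symm
  have hfin1 := hfinofReal (fun z => ωt z.2 z.1 * f z.2 z.1 - 1) (fun z => le_rfl)
  have hfin2 := hfinofReal (fun z => -(ωt z.2 z.1 * f z.2 z.1 - 1))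
    (fun z => le_of_eq (abs_neg _))
  have hrecteq : ∀ (r : Set (𝒳 × 𝒯)), MeasurableSet r →
      (∫ z in r, (ωt z.2 z.1 * f z.2 z.1 - 1) ∂((μ.map X).prod ν) = 0) →
      ((μ.map X).prod ν).withDensity (fun z => ENNReal.ofReal (ωt z.2 z.1 * f z.2 z.1 - 1)) r
        = ((μ.map X).prod ν).withDensity
            (fun z => ENNReal.ofReal (-(ωt z.2 z.1 * f z.2 z.1 - 1))) r := by
    intro r hr h0
    rw [withDensity_apply _ hr, withDensity_apply _ hr]
    have hint := integral_eq_lintegral_pos_part_sub_lintegral_neg_part (hDint.restrict (s := r))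
    rw [h0] at hint
    have ha : ∫⁻ z in r, ENNReal.ofReal (ωt z.2 z.1 * f z.2 z.1 - 1) ∂((μ.map X).prod ν) ≠ ⊤ :=
      ne_top_of_le_ne_top hfin1 (lintegral_mono' Measure.restrict_le_self (le_refl _))
    have hb : ∫⁻ z in r, ENNReal.ofReal (-(ωt z.2 z.1 * f z.2 z.1 - 1)) ∂((μ.map X).prod ν)
        ≠ ⊤ :=
      ne_top_of_le_ne_top hfin2 (lintegral_mono' Measure.restrict_le_self (le_refl _))
    have := (sub_eq_zero.mp hint.symm)
    exact (ENNReal.toReal_eq_toReal_iff' ha hb).mp this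
  have hσ : ((μ.map X).prod ν).withDensity
        (fun z => ENNReal.ofReal (ωt z.2 z.1 * f z.2 z.1 - 1))
      = ((μ.map X).prod ν).withDensity
          (fun z => ENNReal.ofReal (-(ωt z.2 z.1 * f z.2 z.1 - 1))) := by
    haveI : IsFiniteMeasure (((μ.map X).prod ν).withDensity
        (fun z => ENNReal.ofReal (ωt z.2 z.1 * f z.2 z.1 - 1))) :=
      isFiniteMeasure_withDensity hfin1
    refine ext_of_generate_finite _ generateFrom_prod.symm isPiSystem_prod ?_ ?_
    · rintro r ⟨s, hs, A, hA, rfl⟩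
      exact hrecteq _ (hs.prod hA) (hrect0 s A hs hA)
    · rw [← Set.univ_prod_univ]
      exact hrecteq _ (MeasurableSet.univ.prod MeasurableSet.univ)
        (hrect0 _ _ MeasurableSet.univ MeasurableSet.univ)
  -- step 6: D = 0 a.e. on the product
  have hae0 : (fun z : 𝒳 × 𝒯 => ωt z.2 z.1 * f z.2 z.1 - 1) =ᵐ[(μ.map X).prod ν] 0 := by
    apply hDint.ae_eq_zero_of_forall_setIntegral_eq_zero
    intro r hr _
    have hint := integral_eq_lintegral_pos_part_sub_lintegral_neg_part (hDint.restrict (s := r))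
    rw [hint, ← withDensity_apply _ hr, ← withDensity_apply _ hr, hσ, sub_self]
  have hae1 : ∀ᵐ x ∂(μ.map X), ∀ᵐ t ∂ν, ωt t x * f t x - 1 = 0 := by
    have h := Measure.ae_ae_of_ae_prod hae0
    simpa using h
  -- step 7: conclude via the nonnegative test function min(|ωt - 1/f|, 1)
  have hφm : Measurable (Function.uncurry fun t x => min |ωt t x - 1 / f t x| 1) := by
    show Measurable fun p : 𝒯 × 𝒳 => min |ωt p.1 p.2 - 1 / f p.1 p.2| 1
    exact ((hωt.sub (measurable_const.div hf)).abs).min measurable_const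
  have hφb : ∀ t x, |min |ωt t x - 1 / f t x| 1| ≤ 1 := by
    intro t x
    rw [abs_of_nonneg (le_min (abs_nonneg _) zero_le_one)]
    exact min_le_right _ _
  have h := hdens _ hφm ⟨1, hφb⟩
  have hGm : Measurable fun x => ∫ t, min |ωt t x - 1 / f t x| 1 * f t x ∂ν := by
    have hm : Measurable fun z : 𝒳 × 𝒯 => min |ωt z.2 z.1 - 1 / f z.2 z.1| 1 * f z.2 z.1 :=
      (((hωt.comp measurable_swap).sub
        (measurable_const.div (hf.comp measurable_swap))).abs.min measurable_const).mul
        (hf.comp measurable_swap)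
    exact hm.stronglyMeasurable.integral_prod_right'.measurable
  have hae2 : ∀ᵐ x ∂(μ.map X), ∫ t, min |ωt t x - 1 / f t x| 1 * f t x ∂ν = 0 := by
    filter_upwards [hae1] with x hx
    apply integral_eq_zero_of_ae
    filter_upwards [hx] with t ht
    have h1 : ωt t x * f t x = 1 := by linarith
    have h2 : ωt t x = 1 / f t x := by
      rw [eq_div_iff (h0f t x).ne']
      exact h1
    simp [h2]
  have hae3 : ∀ᵐ ω ∂μ, ∫ t, min |ωt t (X ω) - 1 / f t (X ω)| 1 * f t (X ω) ∂ν = 0 := by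
    have hms : MeasurableSet {x | ∫ t, min |ωt t x - 1 / f t x| 1 * f t x ∂ν = 0} :=
      hGm (measurableSet_singleton 0)
    exact (ae_map_iff hX.aemeasurable hms).mp hae2
  have hzero2 : ∫ ω, min |ωt (T ω) (X ω) - 1 / f (T ω) (X ω)| 1 ∂μ = 0 := by
    rw [h]
    apply integral_eq_zero_of_ae
    filter_upwards [hae3] with ω hω
    exact hω
  have hnonneg : 0 ≤ᵐ[μ] fun ω => min |ωt (T ω) (X ω) - 1 / f (T ω) (X ω)| 1 :=
    ae_of_all _ fun ω => le_min (abs_nonneg _) zero_le_one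
  have hintφ : Integrable (fun ω => min |ωt (T ω) (X ω) - 1 / f (T ω) (X ω)| 1) μ := by
    apply hintμ _ 1
    · exact ((hωt.comp (hT.prodMk hX)).sub
        (measurable_const.div (hf.comp (hT.prodMk hX)))).abs.min measurable_const
    · intro ω; exact hφb _ _
  have hfinal := (integral_eq_zero_iff_of_nonneg_ae hnonneg hintφ).mp hzero2
  filter_upwards [hfinal] with ω hω
  have hω' : min |ωt (T ω) (X ω) - 1 / f (T ω) (X ω)| 1 = 0 := hω
  rcases min_eq_iff.mp hω' with ⟨h1, _⟩ | ⟨h1, _⟩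
  · have := abs_eq_zero.mp h1
    linarith [sub_eq_zero.mp this]
  · norm_num at h1
end
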